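/- Every element f of the subfield ℂ(z²) of ℂ(z) can be written as f(z) = g(z)·g(−z) for some g ∈ ℂ(z). Consequently ℂ(z²) = { g(z)·g(−z) : g ∈ ℂ(z) } as sets (restricting to nonzero elements on both sides). -/

import Mathlib

open Polynomial IntermediateField

/-- forward factorization: every `p(X²)` is of the form `g · η g`. -/
lemma aux_forward (η : RatFunc ℂ →ₐ[ℂ] RatFunc ℂ) (hη : η RatFunc.X = -RatFunc.X) (p : ℂ[X]) :
    ∃ g : RatFunc ℂ, Polynomial.aeval (RatFunc.X ^ 2 : RatFunc ℂ) p = g * η g := by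
  by_cases hp : p = 0
  · exact ⟨0, by simp [hp]⟩
  have hsplit : p.Splits := IsAlgClosed.splits p
  have hfact := Polynomial.Splits.eq_prod_roots hsplit
  have hmul : ∀ a b : RatFunc ℂ, (∃ g, a = g * η g) → (∃ g, b = g * η g) →
      ∃ g, a * b = g * η g := by
    rintro a b ⟨g, rfl⟩ ⟨h, rfl⟩
    exact ⟨g * h, by rw [map_mul]; ring⟩
  have hprod : ∀ m : Multiset ℂ,
      ∃ g, (m.map fun a => (RatFunc.X : RatFunc ℂ) ^ 2 - algebraMap ℂ _ a).prod = g * η g := by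
    intro m
    induction m using Multiset.induction with
    | empty => exact ⟨1, by simp⟩
    | cons a m ih =>
      obtain ⟨s, hs⟩ := IsAlgClosed.exists_pow_nat_eq a (n := 2) zero_lt_two
      have h1 : ∃ g, (RatFunc.X : RatFunc ℂ) ^ 2 - algebraMap ℂ _ a = g * η g := by
        refine ⟨algebraMap ℂ _ Complex.I * (RatFunc.X - algebraMap ℂ _ s), ?_⟩
        rw [map_mul, map_sub, hη, AlgHom.commutes, AlgHom.commutes, ← hs, map_pow]
        have hI : (algebraMap ℂ (RatFunc ℂ)) Complex.I * algebraMap ℂ (RatFunc ℂ) Complex.I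
            = -1 := by rw [← map_mul, Complex.I_mul_I, map_neg, map_one]
        linear_combination (RatFunc.X ^ 2 - algebraMap ℂ (RatFunc ℂ) s ^ 2) * hI
      rw [Multiset.map_cons, Multiset.prod_cons]
      exact hmul _ _ h1 ih
  obtain ⟨s, hs⟩ := IsAlgClosed.exists_pow_nat_eq p.leadingCoeff (n := 2) zero_lt_two
  have hc : ∃ g, (algebraMap ℂ (RatFunc ℂ) p.leadingCoeff) = g * η g :=
    ⟨algebraMap ℂ _ s, by rw [AlgHom.commutes, ← map_mul, ← hs]; ring_nf⟩
  obtain ⟨g, hg⟩ := hprod p.roots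
  obtain ⟨g', hg'⟩ := hmul _ _ hc ⟨g, hg⟩
  refine ⟨g', ?_⟩
  rw [← hg']
  conv_lhs => rw [hfact]
  rw [map_mul, map_multiset_prod, Multiset.map_map]
  congr 1
  · exact Polynomial.aeval_C _ _
  · congr 1
    apply Multiset.map_congr rfl
    intro a _
    simp only [Function.comp_apply, map_sub, Polynomial.aeval_X, Polynomial.aeval_C]

/-- backward: `p(z)·p(−z)` lies in `ℂ(z²)`, for `p` a polynomial. -/
lemma aux_backward (η : RatFunc ℂ →ₐ[ℂ] RatFunc ℂ) (hη : η RatFunc.X = -RatFunc.X) (p : ℂ[X]) :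
    (algebraMap ℂ[X] (RatFunc ℂ) p) * η (algebraMap ℂ[X] (RatFunc ℂ) p) ∈
      IntermediateField.adjoin ℂ ({RatFunc.X ^ 2} : Set (RatFunc ℂ)) := by
  by_cases hp : p = 0
  · rw [hp, map_zero, map_zero, mul_zero]; exact zero_mem _
  have hsplit : p.Splits := IsAlgClosed.splits p
  have hfact := Polynomial.Splits.eq_prod_roots hsplit
  set K := IntermediateField.adjoin ℂ ({RatFunc.X ^ 2} : Set (RatFunc ℂ)) with hK
  have hX2 : (RatFunc.X : RatFunc ℂ) ^ 2 ∈ K :=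
    IntermediateField.subset_adjoin _ _ rfl
  have hrw : algebraMap ℂ[X] (RatFunc ℂ) p = algebraMap ℂ[X] (RatFunc ℂ)
      (Polynomial.C p.leadingCoeff * (p.roots.map fun a => X - Polynomial.C a).prod) := by
    rw [← hfact]
  rw [hrw]
  simp only [map_mul, map_multiset_prod, Multiset.map_map]
  have hC : ∀ a : ℂ, algebraMap ℂ[X] (RatFunc ℂ) (Polynomial.C a) = algebraMap ℂ _ a := by
    intro a; rw [RatFunc.algebraMap_C, RatFunc.algebraMap_eq_C]
  rw [hC]
  have : ((algebraMap ℂ (RatFunc ℂ) p.leadingCoeff *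
      (p.roots.map (algebraMap ℂ[X] (RatFunc ℂ) ∘ fun a => X - Polynomial.C a)).prod) *
      (η (algebraMap ℂ (RatFunc ℂ) p.leadingCoeff) *
      (p.roots.map (⇑η ∘ algebraMap ℂ[X] (RatFunc ℂ) ∘ fun a => X - Polynomial.C a)).prod))
      = (algebraMap ℂ (RatFunc ℂ) p.leadingCoeff * η (algebraMap ℂ (RatFunc ℂ) p.leadingCoeff)) *
        ((p.roots.map (algebraMap ℂ[X] (RatFunc ℂ) ∘ fun a => X - Polynomial.C a)).prod *
         (p.roots.map (⇑η ∘ algebraMap ℂ[X] (RatFunc ℂ) ∘ fun a => X - Polynomial.C a)).prod) := by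
    ring
  rw [this, ← Multiset.prod_map_mul]
  refine mul_mem ?_ ?_
  · exact mul_mem (K.algebraMap_mem _) (by rw [AlgHom.commutes]; exact K.algebraMap_mem _)
  · refine multiset_prod_mem _ fun x hx => ?_
    obtain ⟨a, _, rfl⟩ := Multiset.mem_map.mp hx
    simp only [Function.comp_apply]
    have h1 : algebraMap ℂ[X] (RatFunc ℂ) (X - Polynomial.C a)
        = RatFunc.X - algebraMap ℂ _ a := by
      rw [map_sub, RatFunc.algebraMap_X, hC]
    rw [h1, map_sub, hη, AlgHom.commutes]
    have h2 : (RatFunc.X - algebraMap ℂ (RatFunc ℂ) a) * (-RatFunc.X - algebraMap ℂ (RatFunc ℂ) a)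
        = algebraMap ℂ (RatFunc ℂ) (a ^ 2) - RatFunc.X ^ 2 := by
      rw [map_pow]; ring
    rw [h2]
    exact sub_mem (K.algebraMap_mem _) hX2

theorem stmt_4 (η : RatFunc ℂ →ₐ[ℂ] RatFunc ℂ) (hη : η RatFunc.X = -RatFunc.X)
    (f : RatFunc ℂ) :
    f ∈ IntermediateField.adjoin ℂ ({RatFunc.X ^ 2} : Set (RatFunc ℂ)) ↔
      ∃ g : RatFunc ℂ, f = g * η g := by
  constructor
  · intro hf
    obtain ⟨r, s, hrs⟩ := (IntermediateField.mem_adjoin_simple_iff ℂ f).mp hf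
    obtain ⟨g, hg⟩ := aux_forward η hη r
    obtain ⟨h, hh⟩ := aux_forward η hη s
    refine ⟨g / h, ?_⟩
    rw [hrs, hg, hh, map_div₀]
    by_cases h0 : h = 0
    · simp [h0]
    · have hηh : η h ≠ 0 := fun hc => h0 (η.injective (by simp [hc]))
      field_simp
      try ring
  · rintro ⟨g, rfl⟩
    by_cases hg : g = 0
    · rw [hg, map_zero, mul_zero]; exact zero_mem _
    have hnum := RatFunc.num_div_denom g
    set N := algebraMap ℂ[X] (RatFunc ℂ) g.num with hN
    set D := algebraMap ℂ[X] (RatFunc ℂ) g.denom with hD'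
    have hD : D ≠ 0 := by
      simpa [hD'] using RatFunc.algebraMap_ne_zero (RatFunc.denom_ne_zero g)
    have hηD : η D ≠ 0 := fun h => hD (η.injective (by simp [h]))
    have key : g * η g = (N * η N) * (D * η D)⁻¹ := by
      rw [← hnum, map_div₀]
      field_simp
      try ring
    rw [key]
    exact mul_mem (aux_backward η hη g.num) (inv_mem (aux_backward η hη g.denom))
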